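/- Let A be a unital Banach algebra over ℝ and let T, T' ∈ A. Set a := T'·T, b := T·T', and g := ∫_0^1 exp(−s·a) ds. Then the 2×2 matrix W over A with entries W₁₁ = exp(−a), W₁₂ = −exp(−(1/2)·a)·g·T', W₂₁ = −exp(−(1/2)·b)·T, W₂₂ = 1 − exp(−b), is an idempotent: W·W = W in the matrix ring M₂(A). -/

import Mathlib

open MeasureTheory intervalIntegral
open scoped Nat

section Aux

variable {A : Type*} [NormedRing A] [NormedAlgebra ℝ A] [CompleteSpace A]

/-- Intertwining: if `T * x = y * T` then `T * exp x = exp y * T`. -/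
lemma heat_semiconj_exp {T x y : A} (h : T * x = y * T) :
    T * NormedSpace.exp x = NormedSpace.exp y * T := by
  have hpow : ∀ n : ℕ, T * x ^ n = y ^ n * T := fun n => (SemiconjBy.pow_right h n)
  simp only [NormedSpace.exp_eq_tsum ℝ]
  have hs : Summable fun n : ℕ => ((n ! : ℝ))⁻¹ • x ^ n :=
    NormedSpace.expSeries_summable' (𝕂 := ℝ) x
  have hs' : Summable fun n : ℕ => ((n ! : ℝ))⁻¹ • y ^ n :=
    NormedSpace.expSeries_summable' (𝕂 := ℝ) y
  calc T * ∑' n : ℕ, ((n ! : ℝ))⁻¹ • x ^ n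
      = ∑' n : ℕ, T * (((n ! : ℝ))⁻¹ • x ^ n) :=
        (ContinuousLinearMap.mul ℝ A T).map_tsum hs
    _ = ∑' n : ℕ, (((n ! : ℝ))⁻¹ • y ^ n) * T := by
        simp_rw [mul_smul_comm, hpow, smul_mul_assoc]
    _ = (∑' n : ℕ, ((n ! : ℝ))⁻¹ • y ^ n) * T :=
        (((ContinuousLinearMap.mul ℝ A).flip T).map_tsum hs').symm

lemma heat_exp_cont (a : A) : Continuous fun s : ℝ => NormedSpace.exp (s • a) := by
  let +nondep _ : NormedAlgebra ℚ A := .restrictScalars ℚ ℝ A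
  exact NormedSpace.exp_continuous.comp (continuous_id.smul continuous_const)

/-- `(∫₀¹ exp(s • (-a)) ds) * a = 1 - exp (-a)`. -/
lemma heat_integral_mul (a : A) :
    (∫ s in (0 : ℝ)..1, NormedSpace.exp (s • (-a))) * a = 1 - NormedSpace.exp (-a) := by
  have hcont := heat_exp_cont (-a)
  have key : ∫ s in (0 : ℝ)..1, NormedSpace.exp (s • (-a)) * (-a)
      = NormedSpace.exp ((1 : ℝ) • (-a)) - NormedSpace.exp ((0 : ℝ) • (-a)) :=
    intervalIntegral.integral_eq_sub_of_hasDerivAt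
      (fun t _ => hasDerivAt_exp_smul_const (-a) t)
      ((hcont.mul continuous_const).intervalIntegrable 0 1)
  have key2 : (∫ s in (0 : ℝ)..1, NormedSpace.exp (s • (-a))) * (-a)
      = NormedSpace.exp (-a) - 1 := by
    have := ((ContinuousLinearMap.mul ℝ A).flip (-a)).intervalIntegral_comp_comm (μ := volume)
        (hcont.intervalIntegrable 0 1)
    simp only [ContinuousLinearMap.flip_apply, ContinuousLinearMap.mul_apply'] at this
    rw [← this, key, one_smul, zero_smul, NormedSpace.exp_zero]
  rw [mul_neg, neg_eq_iff_eq_neg, neg_sub] at key2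
  exact key2

/-- Anything commuting with `a` commutes with `∫₀¹ exp(s • (-a)) ds`. -/
lemma heat_commute_integral {x a : A} (h : Commute x a) :
    Commute x (∫ s in (0 : ℝ)..1, NormedSpace.exp (s • (-a))) := by
  have hcont := heat_exp_cont (-a)
  have hL := (ContinuousLinearMap.mul ℝ A x).intervalIntegral_comp_comm (μ := volume)
    (hcont.intervalIntegrable 0 1)
  have hR := ((ContinuousLinearMap.mul ℝ A).flip x).intervalIntegral_comp_comm (μ := volume)
    (hcont.intervalIntegrable 0 1)
  simp only [ContinuousLinearMap.flip_apply, ContinuousLinearMap.mul_apply'] at hL hR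
  have hptwise : ∀ s : ℝ, x * NormedSpace.exp (s • (-a)) = NormedSpace.exp (s • (-a)) * x :=
    fun s => ((h.neg_right.smul_right s).exp_right)
  show x * _ = _ * x
  rw [← hL, ← hR]
  exact intervalIntegral.integral_congr fun s _ => hptwise s

/-- Intertwining of the heat integrals: `T * (∫₀¹ exp(s•(-a))) = (∫₀¹ exp(s•(-b))) * T`
when `T * a = b * T`. -/
lemma heat_semiconj_integral {T a b : A} (h : T * a = b * T) :
    T * (∫ s in (0 : ℝ)..1, NormedSpace.exp (s • (-a)))
      = (∫ s in (0 : ℝ)..1, NormedSpace.exp (s • (-b))) * T := by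
  have hL := (ContinuousLinearMap.mul ℝ A T).intervalIntegral_comp_comm (μ := volume)
    ((heat_exp_cont (-a)).intervalIntegrable 0 1)
  have hR := ((ContinuousLinearMap.mul ℝ A).flip T).intervalIntegral_comp_comm (μ := volume)
    ((heat_exp_cont (-b)).intervalIntegrable 0 1)
  simp only [ContinuousLinearMap.flip_apply, ContinuousLinearMap.mul_apply'] at hL hR
  have hptwise : ∀ s : ℝ,
      T * NormedSpace.exp (s • (-a)) = NormedSpace.exp (s • (-b)) * T := by
    intro s
    refine heat_semiconj_exp ?_
    rw [mul_smul_comm, smul_mul_assoc, mul_neg, neg_mul, h]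
  rw [← hL, ← hR]
  exact intervalIntegral.integral_congr fun s _ => hptwise s

/-- Purely algebraic form of the idempotent computation. -/
lemma heat_entries {R : Type*} [Ring R] (T T' a b ea eha eb ehb g : R)
    (ha : a = T' * T) (hb : b = T * T')
    (h1 : eha * eha = ea) (h2 : ehb * ehb = eb)
    (h3 : T' * ehb = eha * T') (h4 : T * eha = ehb * T)
    (h5 : T' * eb = ea * T') (h6 : T * ea = eb * T)
    (h7 : g * a = 1 - ea) (h8 : g * eha = eha * g) (h9 : T * (g * T') = 1 - eb) :
    (ea * ea + -(eha * (g * T')) * -(ehb * T) = ea)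
    ∧ (ea * -(eha * (g * T')) + -(eha * (g * T')) * (1 - eb) = -(eha * (g * T')))
    ∧ (-(ehb * T) * ea + (1 - eb) * -(ehb * T) = -(ehb * T))
    ∧ (-(ehb * T) * -(eha * (g * T')) + (1 - eb) * (1 - eb) = 1 - eb) := by
  have h1' : ∀ x : R, eha * (eha * x) = ea * x := fun x => by rw [← mul_assoc, h1]
  have h2' : ∀ x : R, ehb * (ehb * x) = eb * x := fun x => by rw [← mul_assoc, h2]
  have h3' : ∀ x : R, T' * (ehb * x) = eha * (T' * x) := fun x => by
    rw [← mul_assoc, h3, mul_assoc]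
  have h4' : ∀ x : R, T * (eha * x) = ehb * (T * x) := fun x => by
    rw [← mul_assoc, h4, mul_assoc]
  have h8' : ∀ x : R, g * (eha * x) = eha * (g * x) := fun x => by
    rw [← mul_assoc, h8, mul_assoc]
  have h10 : g * ea = ea * g := by
    rw [← h1, ← mul_assoc, h8, mul_assoc, h8, mul_assoc]
  have h10' : ∀ x : R, g * (ea * x) = ea * (g * x) := fun x => by
    rw [← mul_assoc, h10, mul_assoc]
  have h11' : ∀ x : R, eha * (ea * x) = ea * (eha * x) := fun x => by
    rw [← h1]; simp only [mul_assoc]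
  have h12' : ∀ x : R, eb * (ehb * x) = ehb * (eb * x) := fun x => by
    rw [← h2]; simp only [mul_assoc]
  refine ⟨?_, ?_, ?_, ?_⟩
  · have e1 : eha * (g * (T' * (ehb * T))) = ea * (1 - ea) := by
      rw [h3' T, h8' (T' * T), ← ha, h1' (g * a), h7]
    calc ea * ea + -(eha * (g * T')) * -(ehb * T)
        = ea * ea + eha * (g * (T' * (ehb * T))) := by noncomm_ring
      _ = ea * ea + ea * (1 - ea) := by rw [e1]
      _ = ea := by noncomm_ring
  · have e2 : eha * (g * (T' * eb)) = ea * (eha * (g * T')) := by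
      rw [h5, h10' T', h11' (g * T')]
    calc ea * -(eha * (g * T')) + -(eha * (g * T')) * (1 - eb)
        = -(ea * (eha * (g * T'))) + (-(eha * (g * T')) + eha * (g * (T' * eb))) := by
          noncomm_ring
      _ = -(ea * (eha * (g * T'))) + (-(eha * (g * T')) + ea * (eha * (g * T'))) := by rw [e2]
      _ = -(eha * (g * T')) := by abel
  · have e3 : ehb * (T * ea) = eb * (ehb * T) := by rw [h6, h12' T]
    calc -(ehb * T) * ea + (1 - eb) * -(ehb * T)
        = -(ehb * (T * ea)) + (-(ehb * T) + eb * (ehb * T)) := by noncomm_ring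
      _ = -(eb * (ehb * T)) + (-(ehb * T) + eb * (ehb * T)) := by rw [e3]
      _ = -(ehb * T) := by abel
  · have e4 : ehb * (T * (eha * (g * T'))) = eb * (1 - eb) := by
      rw [h4' (g * T'), h2' (T * (g * T')), h9]
    calc -(ehb * T) * -(eha * (g * T')) + (1 - eb) * (1 - eb)
        = ehb * (T * (eha * (g * T'))) + (1 - eb) * (1 - eb) := by noncomm_ring
      _ = eb * (1 - eb) + (1 - eb) * (1 - eb) := by rw [e4]
      _ = 1 - eb := by noncomm_ring

end Aux

/-- The Wassermann-type heat idempotent: in a unital real Banach algebra `A`, for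
`T T' : A`, with `a = T'·T`, `b = T·T'` and `g = ∫₀¹ exp(−s·a) ds`, the 2×2 matrix
`W = [[exp(−a), −exp(−a/2)·g·T'], [−exp(−b/2)·T, 1 − exp(−b)]]` satisfies `W·W = W`. -/
theorem heat_matrix_idempotent {A : Type*} [NormedRing A] [NormedAlgebra ℝ A]
    [CompleteSpace A] (T T' : A) :
    let a := T' * T
    let b := T * T'
    let g := ∫ s in (0 : ℝ)..1, NormedSpace.exp (-(s • a))
    let W : Matrix (Fin 2) (Fin 2) A :=
      !![NormedSpace.exp (-a), -(NormedSpace.exp (-((1 / 2 : ℝ) • a)) * g * T');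
         -(NormedSpace.exp (-((1 / 2 : ℝ) • b)) * T), 1 - NormedSpace.exp (-b)]
    W * W = W := by
  intro a b g W
  have hg : g = ∫ s in (0 : ℝ)..1, NormedSpace.exp (s • (-a)) := by
    simp_rw [smul_neg]
    rfl
  set ea := NormedSpace.exp (-a) with hea
  set eb := NormedSpace.exp (-b) with heb
  set eha := NormedSpace.exp (-((1 / 2 : ℝ) • a)) with heha
  set ehb := NormedSpace.exp (-((1 / 2 : ℝ) • b)) with hehb
  -- the algebraic hypotheses
  have h1 : eha * eha = ea := by
    have habs : (-((1 / 2 : ℝ) • a)) + (-((1 / 2 : ℝ) • a)) = -a := by module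
    let +nondep _ : NormedAlgebra ℚ A := .restrictScalars ℚ ℝ A
    rw [heha, hea, ← habs, NormedSpace.exp_add_of_commute (Commute.refl _)]
  have h2 : ehb * ehb = eb := by
    have habs : (-((1 / 2 : ℝ) • b)) + (-((1 / 2 : ℝ) • b)) = -b := by module
    let +nondep _ : NormedAlgebra ℚ A := .restrictScalars ℚ ℝ A
    rw [hehb, heb, ← habs, NormedSpace.exp_add_of_commute (Commute.refl _)]
  have hsc : ∀ c : ℝ, T' * (-(c • b)) = (-(c • a)) * T' := by
    intro c
    show T' * (-(c • (T * T'))) = (-(c • (T' * T))) * T'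
    rw [mul_neg, neg_mul, mul_smul_comm, smul_mul_assoc, mul_assoc]
  have hsc' : ∀ c : ℝ, T * (-(c • a)) = (-(c • b)) * T := by
    intro c
    show T * (-(c • (T' * T))) = (-(c • (T * T'))) * T
    rw [mul_neg, neg_mul, mul_smul_comm, smul_mul_assoc, mul_assoc]
  have h3 : T' * ehb = eha * T' := heat_semiconj_exp (hsc (1 / 2))
  have h4 : T * eha = ehb * T := heat_semiconj_exp (hsc' (1 / 2))
  have h5 : T' * eb = ea * T' := by
    have := heat_semiconj_exp (x := -b) (y := -a) (T := T') ?_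
    · rw [hea, heb]; exact this
    · have := hsc 1; simpa using this
  have h6 : T * ea = eb * T := by
    have := heat_semiconj_exp (x := -a) (y := -b) (T := T) ?_
    · rw [hea, heb]; exact this
    · have := hsc' 1; simpa using this
  have h7 : g * a = 1 - ea := by rw [hg, hea]; exact heat_integral_mul a
  have h8 : g * eha = eha * g := by
    have hcom : Commute eha a := by
      have : Commute (-((1 / 2 : ℝ) • a)) a := ((Commute.refl a).smul_left _).neg_left
      exact this.exp_left
    have := (heat_commute_integral (x := eha) (a := a) hcom).symm
    rw [hg]
    exact this.eq
  have h9 : T * (g * T') = 1 - eb := by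
    have hTg : T * g = (∫ s in (0 : ℝ)..1, NormedSpace.exp (s • (-b))) * T := by
      rw [hg]
      refine heat_semiconj_integral ?_
      show T * (T' * T) = (T * T') * T
      rw [mul_assoc]
    rw [← mul_assoc, hTg, mul_assoc]
    show (∫ s in (0 : ℝ)..1, NormedSpace.exp (s • (-b))) * b = 1 - eb
    rw [heb]
    exact heat_integral_mul b
  obtain ⟨E00, E01, E10, E11⟩ := heat_entries T T' a b ea eha eb ehb g rfl rfl
    h1 h2 h3 h4 h5 h6 h7 h8 h9
  show W * W = W
  have hW : W = !![ea, -(eha * g * T'); -(ehb * T), 1 - eb] := rfl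
  rw [hW, Matrix.mul_fin_two]
  simp only [mul_assoc] at E00 E01 E10 E11 ⊢
  ext i j
  fin_cases i <;> fin_cases j <;>
    simp only [Matrix.cons_val', Matrix.cons_val_zero, Matrix.cons_val_one, Matrix.head_cons,
      Matrix.empty_val', Matrix.cons_val_fin_one, Matrix.head_fin_const]
  · exact E00
  · exact E01
  · exact E10
  · exact E11
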